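/- For 0 <= j+k <= d-1, the polynomials b_{j,k}(x,y) = x^j y^k - x^j y^k (x+y)^{d-j-k} all vanish identically on the line x + y = 1, and they are linearly independent over the reals. -/

import Mathlib

open MvPolynomial

noncomputable def bPoly (d j k : ℕ) : MvPolynomial (Fin 2) ℝ :=
  X 0 ^ j * X 1 ^ k - X 0 ^ j * X 1 ^ k * (X 0 + X 1) ^ (d - j - k)

lemma bHom (d j k : ℕ) (h : j + k ≤ d) :
    (X 0 ^ j * X 1 ^ k * (X 0 + X 1) ^ (d - j - k) :
      MvPolynomial (Fin 2) ℝ).IsHomogeneous d := by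
  obtain ⟨n, rfl⟩ : ∃ n, d = j + k + n := ⟨d - j - k, by omega⟩
  have he : j + k + n - j - k = n := by omega
  rw [he]
  have := (((isHomogeneous_X ℝ (0 : Fin 2)).pow j).mul
      ((isHomogeneous_X ℝ (1 : Fin 2)).pow k)).mul
    (((isHomogeneous_X ℝ (0 : Fin 2)).add (isHomogeneous_X ℝ (1 : Fin 2))).pow n)
  simpa using this

lemma mono_eq (j k : ℕ) :
    (X 0 ^ j * X 1 ^ k : MvPolynomial (Fin 2) ℝ) =
      monomial (Finsupp.single 0 j + Finsupp.single 1 k) 1 := by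
  rw [X_pow_eq_monomial, X_pow_eq_monomial, monomial_mul, one_mul]

lemma single_deg (j k : ℕ) :
    (Finsupp.single (0 : Fin 2) j + Finsupp.single 1 k).degree = j + k := by
  rw [Finsupp.degree_apply, Finset.sum_subset (Finset.subset_univ _)
      (fun i _ hi => Finsupp.notMem_support_iff.mp hi), Fin.sum_univ_two]
  simp [Finsupp.single_apply]

lemma coeff_b (d j k j' k' : ℕ) (h : j + k ≤ d - 1) (h' : j' + k' ≤ d - 1) (hd : 1 ≤ d) :
    coeff (Finsupp.single 0 j + Finsupp.single 1 k) (bPoly d j' k') =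
      if j' = j ∧ k' = k then 1 else 0 := by
  unfold bPoly
  rw [coeff_sub, (bHom d j' k' (by omega) : _).coeff_eq_zero (by rw [single_deg]; omega),
    mono_eq, coeff_monomial, sub_zero]
  congr 1
  simp only [eq_iff_iff]
  constructor
  · intro he
    constructor
    · have := DFunLike.congr_fun he (0 : Fin 2)
      simpa using this
    · have := DFunLike.congr_fun he (1 : Fin 2)
      simpa using this
  · rintro ⟨rfl, rfl⟩; rfl

theorem stmt_15 (d : ℕ) (hd : 1 ≤ d) :
    (∀ j k : ℕ, j + k ≤ d - 1 → ∀ x y : ℝ, x + y = 1 →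
      MvPolynomial.eval ![x, y] (bPoly d j k) = 0) ∧
    LinearIndependent ℝ
      (fun jk : {jk : ℕ × ℕ // jk.1 + jk.2 ≤ d - 1} =>
        bPoly d jk.1.1 jk.1.2) := by
  constructor
  · intro j k _ x y hxy
    simp [bPoly, hxy]
  · rw [linearIndependent_iff']
    intro s g hsum i hi
    have := congrArg (coeff (Finsupp.single 0 i.1.1 + Finsupp.single 1 i.1.2)) hsum
    rw [coeff_zero] at this
    rw [show coeff _ _ = _ from (coeff_sum s _ _)] at this
    · rw [Finset.sum_eq_single i] at this
      · rw [coeff_smul, coeff_b d i.1.1 i.1.2 i.1.1 i.1.2 i.2 i.2 hd] at this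
        simpa using this
      · intro b hb hbi
        rw [coeff_smul, coeff_b d i.1.1 i.1.2 b.1.1 b.1.2 i.2 b.2 hd, if_neg, smul_zero]
        intro ⟨h1, h2⟩
        exact hbi (Subtype.ext (Prod.ext h1 h2))
      · intro h; exact absurd hi h
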